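/- For n ≥ 4, the S_n-representation A^1(M̄_{0,n}) ≅ H²(M̄_{0,n};ℚ) is isomorphic to ⊕_{a even, 4 ≤ a ≤ n−3 or a = n} U_{a,n−a}; in particular, in terms of characters, ch_n(A^1(M̄_{0,n})) = ∑_{a even, a ≥ 4} s_{(a)}s_{(n−a)} (with the convention s_{(0)} = 1 and the sum over 4 ≤ a ≤ n with n − a = 0 or n − a ≥ 1 as appropriate). Consequently A^1(M̄_{0,n}) is a permutation representation of S_n. -/

import Mathlib

/-! ## Keel's presentation of `A¹(M̄_{0,n})`
By Keel's theorem, `A¹(M̄_{0,n}) = H²(M̄_{0,n};ℚ)` is the ℚ-vector space with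
generators the boundary divisor classes `D_I` for `I ⊆ {1,…,n}` with
`2 ≤ |I| ≤ n − 2`, subject to the relations `D_I = D_{Iᶜ}` and, for pairwise distinct
`i, j, k, l`, `∑_{i,j ∈ I; k,l ∉ I} D_I = ∑_{i,k ∈ I; j,l ∉ I} D_I`.  The symmetric group
`S_n` acts by permuting the marked points, i.e. by relabeling the indices `I`. -/

open Finset

/-- Index set of boundary divisors `D_I`, `2 ≤ |I| ≤ n − 2`. -/
def BIdx (n : ℕ) := {I : Finset (Fin n) // 2 ≤ I.card ∧ I.card ≤ n - 2}

noncomputable instance (n : ℕ) : Fintype (BIdx n) := by unfold BIdx; infer_instance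

/-- The Keel relations: `D_I − D_{Iᶜ}` and, for pairwise distinct `i, j, k, l`,
`∑_{i,j∈I; k,l∉I} D_I − ∑_{i,k∈I; j,l∉I} D_I`. -/
def keelRelations (n : ℕ) : Set (BIdx n →₀ ℚ) :=
  {x | ∃ I J : BIdx n, J.1 = I.1ᶜ ∧ x = Finsupp.single I 1 - Finsupp.single J 1} ∪
  {x | ∃ i j k l : Fin n, i ≠ j ∧ i ≠ k ∧ i ≠ l ∧ j ≠ k ∧ j ≠ l ∧ k ≠ l ∧
      x = (∑ I : BIdx n,
            if i ∈ I.1 ∧ j ∈ I.1 ∧ k ∉ I.1 ∧ l ∉ I.1 then Finsupp.single I (1 : ℚ) else 0)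
        - ∑ I : BIdx n,
            if i ∈ I.1 ∧ k ∈ I.1 ∧ j ∉ I.1 ∧ l ∉ I.1 then Finsupp.single I (1 : ℚ) else 0}

/-- The submodule of relations. -/
noncomputable def keelSub (n : ℕ) : Submodule ℚ (BIdx n →₀ ℚ) :=
  Submodule.span ℚ (keelRelations n)

/-- Keel's presentation of `A¹(M̄_{0,n}) = H²(M̄_{0,n};ℚ)`. -/
abbrev KeelMod (n : ℕ) := (BIdx n →₀ ℚ) ⧸ keelSub n

/-- Relabeling of a boundary index by a permutation of the marked points. -/
def permBIdx (n : ℕ) (σ : Equiv.Perm (Fin n)) (I : BIdx n) : BIdx n :=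
  ⟨I.1.image σ, by
    rw [Finset.card_image_of_injective _ σ.injective]; exact I.2⟩

/-- The `S_n`-action on the free module on boundary divisors. -/
noncomputable def keelRelabel (n : ℕ) (σ : Equiv.Perm (Fin n)) :
    (BIdx n →₀ ℚ) →ₗ[ℚ] (BIdx n →₀ ℚ) :=
  Finsupp.lmapDomain ℚ ℚ (permBIdx n σ)

/-- Index set of the permutation representation `⊕_{a even, 4 ≤ a ≤ n} U_{a,n−a}`:
pairs of an even `a` with `4 ≤ a ≤ n` and an `a`-element subset `A` of `{1,…,n}`
(the case `a = n` contributing the single point giving `U_n`). -/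
def TIdx (n : ℕ) := {p : ℕ × Finset (Fin n) // Even p.1 ∧ 4 ≤ p.1 ∧ p.1 ≤ n ∧ p.2.card = p.1}

/-- The `S_n`-action on the index set. -/
def permTIdx (n : ℕ) (σ : Equiv.Perm (Fin n)) (p : TIdx n) : TIdx n :=
  ⟨(p.1.1, p.1.2.image σ), by
    obtain ⟨h1, h2, h3, h4⟩ := p.2
    refine ⟨h1, h2, h3, ?_⟩
    rw [Finset.card_image_of_injective _ σ.injective]; exact h4⟩

open scoped symmDiff

namespace KeelAux

variable {n : ℕ}

/-- toggle membership of `x`. -/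
def tog (x : Fin n) (S : Finset (Fin n)) : Finset (Fin n) :=
  if x ∈ S then S.erase x else insert x S

lemma tog_tog (x : Fin n) (S : Finset (Fin n)) : tog x (tog x S) = S := by
  unfold tog
  by_cases h : x ∈ S
  · simp [h, Finset.insert_erase h]
  · simp [h, Finset.erase_insert h]

lemma mem_tog {y x : Fin n} (S : Finset (Fin n)) (hyx : y ≠ x) : y ∈ tog x S ↔ y ∈ S := by
  unfold tog
  split <;> simp [hyx]

lemma tog_ne (x : Fin n) (S : Finset (Fin n)) : tog x S ≠ S := by
  unfold tog
  split
  · simp only [ne_eq, Finset.erase_eq_self]; simpa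
  · simp only [ne_eq, Finset.insert_eq_self]; simpa

lemma inter_tog_not_mem {x : Fin n} {A : Finset (Fin n)} (hx : x ∉ A) (S : Finset (Fin n)) :
    A ∩ tog x S = A ∩ S := by
  ext y
  by_cases hyx : y = x
  · subst hyx; simp [hx]
  · simp [mem_tog _ hyx]

lemma sgn_tog {x : Fin n} {A : Finset (Fin n)} (hx : x ∈ A) (S : Finset (Fin n)) :
    (-1 : ℚ) ^ ((A ∩ tog x S).card) = -(-1 : ℚ) ^ ((A ∩ S).card) := by
  unfold tog
  by_cases h : x ∈ S
  · rw [if_pos h]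
    have h1 : A ∩ S.erase x = (A ∩ S).erase x := by
      ext y; simp only [Finset.mem_inter, Finset.mem_erase]; tauto
    have hm : x ∈ A ∩ S := Finset.mem_inter.mpr ⟨hx, h⟩
    obtain ⟨c, hc⟩ : ∃ c, (A ∩ S).card = c + 1 :=
      ⟨(A ∩ S).card - 1, (Nat.succ_pred_eq_of_pos (Finset.card_pos.mpr ⟨x, hm⟩)).symm⟩
    rw [h1, Finset.card_erase_of_mem hm, hc]
    simp [pow_succ]
  · rw [if_neg h]
    have h1 : A ∩ insert x S = insert x (A ∩ S) := by
      ext y; simp only [Finset.mem_inter, Finset.mem_insert]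
      constructor
      · rintro ⟨hy, (rfl | hy')⟩
        · exact Or.inl rfl
        · exact Or.inr ⟨hy, hy'⟩
      · rintro (rfl | ⟨hy, hy'⟩)
        · exact ⟨hx, Or.inl rfl⟩
        · exact ⟨hy, Or.inr hy'⟩
    have hm : x ∉ A ∩ S := fun hc => h (Finset.mem_inter.mp hc).2
    rw [h1, Finset.card_insert_of_notMem hm]
    simp [pow_succ]

lemma sum_sgn (C : Finset (Fin n)) :
    ∑ S : Finset (Fin n), (-1 : ℚ) ^ ((C ∩ S).card) = if C = ∅ then (2 : ℚ) ^ n else 0 := by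
  split_ifs with h
  · subst h
    simp only [Finset.empty_inter, Finset.card_empty, pow_zero, Finset.sum_const, nsmul_eq_mul,
      mul_one, Finset.card_univ, Fintype.card_finset, Fintype.card_fin]
    push_cast
    ring
  · obtain ⟨x, hx⟩ := Finset.nonempty_iff_ne_empty.mpr h
    apply Finset.sum_ninvolution (tog x)
    · intro S
      rw [sgn_tog hx S]
      ring
    · intro S _
      exact tog_ne x S
    · intro S
      exact Finset.mem_univ _
    · intro S
      exact tog_tog x S

lemma sgn_mul_sgn (X Y : Finset (Fin n)) :
    (-1 : ℚ) ^ X.card * (-1 : ℚ) ^ Y.card = (-1 : ℚ) ^ ((X ∆ Y).card) := by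
  have hd : Disjoint (X ∆ Y) (X ∩ Y) := disjoint_symmDiff_inf X Y
  have hu : (X ∆ Y) ∪ (X ∩ Y) = X ∪ Y := by
    have h := symmDiff_sup_inf X Y
    simpa only [Finset.sup_eq_union, Finset.inf_eq_inter] using h
  have h1 : (X ∆ Y).card + (X ∩ Y).card = (X ∪ Y).card := by
    rw [← Finset.card_union_of_disjoint hd, hu]
  have h2 : (X ∪ Y).card + (X ∩ Y).card = X.card + Y.card := Finset.card_union_add_card_inter X Y
  calc (-1 : ℚ) ^ X.card * (-1 : ℚ) ^ Y.card
      = (-1 : ℚ) ^ (X.card + Y.card) := (pow_add _ _ _).symm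
    _ = (-1 : ℚ) ^ ((X ∆ Y).card + 2 * (X ∩ Y).card) := by congr 1; omega
    _ = (-1 : ℚ) ^ ((X ∆ Y).card) := by rw [pow_add, pow_mul]; norm_num

lemma sum_sgn_two (A B : Finset (Fin n)) :
    ∑ S : Finset (Fin n), (-1 : ℚ) ^ ((A ∩ S).card) * (-1 : ℚ) ^ ((B ∩ S).card)
      = if A = B then (2 : ℚ) ^ n else 0 := by
  have key : ∀ S : Finset (Fin n),
      (-1 : ℚ) ^ ((A ∩ S).card) * (-1 : ℚ) ^ ((B ∩ S).card)
        = (-1 : ℚ) ^ (((A ∆ B) ∩ S).card) := by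
    intro S
    have hset : ((A ∩ S) ∆ (B ∩ S)) = (A ∆ B) ∩ S := by
      ext y
      simp only [Finset.mem_inter, Finset.mem_symmDiff]
      tauto
    rw [sgn_mul_sgn, hset]
  rw [Finset.sum_congr rfl fun S _ => key S, sum_sgn]
  have : A ∆ B = ∅ ↔ A = B := by rw [← Finset.bot_eq_empty, symmDiff_eq_bot]
  by_cases h : A = B
  · rw [if_pos (this.mpr h), if_pos h]
  · rw [if_neg (fun hc => h (this.mp hc)), if_neg h]

end KeelAux
namespace KeelAux

instance (n : ℕ) : DecidableEq (TIdx n) := by unfold TIdx; infer_instance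

instance (n : ℕ) : DecidableEq (BIdx n) := by unfold BIdx; infer_instance

noncomputable instance (n : ℕ) : Fintype (TIdx n) :=
  Fintype.ofInjective (fun p => p.1.2) (by
    rintro ⟨⟨a, A⟩, h⟩ ⟨⟨b, B⟩, h'⟩ hAB
    simp only at hAB
    subst hAB
    simp only at h h'
    have : a = b := by rw [← h.2.2.2, ← h'.2.2.2]
    subst this
    rfl)

variable {n : ℕ}

lemma card_le_n (S : Finset (Fin n)) : S.card ≤ n := by
  simpa using Finset.card_le_univ S

/-- the matrix coefficient attached to row `p` and column `S`. -/
def chi (n : ℕ) (p : TIdx n) (S : Finset (Fin n)) : ℚ :=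
  if p.1.1 = n then 1 else if (p.1.2 ∩ S).card % 2 = 1 then 1 else 0

lemma inter_compl_card (A S : Finset (Fin n)) :
    (A ∩ Sᶜ).card + (A ∩ S).card = A.card := by
  rw [← Finset.card_union_of_disjoint]
  · congr 1
    ext y
    by_cases h : y ∈ S <;> simp [h]
  · rw [Finset.disjoint_left]
    intro y hy hy'
    simp only [Finset.mem_inter, Finset.mem_compl] at hy hy'
    exact hy.2 hy'.2

lemma chi_compl (p : TIdx n) (S : Finset (Fin n)) : chi n p Sᶜ = chi n p S := by
  unfold chi
  split
  · rfl
  · have hkey := inter_compl_card p.1.2 S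
    have heven : p.1.2.card % 2 = 0 := by
      rw [p.2.2.2.2, Nat.even_iff.mp p.2.1]
    have : (p.1.2 ∩ Sᶜ).card % 2 = 1 ↔ (p.1.2 ∩ S).card % 2 = 1 := by omega
    simp only [this]

noncomputable def rowF (n : ℕ) (S : Finset (Fin n)) : TIdx n →₀ ℚ :=
  ∑ p : TIdx n, Finsupp.single p (chi n p S)

noncomputable def phiMap (n : ℕ) : (BIdx n →₀ ℚ) →ₗ[ℚ] (TIdx n →₀ ℚ) :=
  Finsupp.lsum ℚ (fun I => LinearMap.toSpanSingleton ℚ _ (rowF n I.1))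

lemma phi_single (I : BIdx n) (r : ℚ) :
    phiMap n (Finsupp.single I r) = r • rowF n I.1 := by
  simp [phiMap, LinearMap.toSpanSingleton_apply]

lemma sum_bidx {M : Type*} [AddCommMonoid M] (f : Finset (Fin n) → M) :
    ∑ I : BIdx n, f I.1
      = ∑ S : Finset (Fin n), if 2 ≤ S.card ∧ S.card ≤ n - 2 then f S else 0 := by
  classical
  rw [← Finset.sum_filter]
  exact (Finset.sum_subtype _ (by simp) f).symm

end KeelAux
namespace KeelAux

variable {n : ℕ}

lemma parity_tog {x : Fin n} {A : Finset (Fin n)} (hx : x ∈ A) (S : Finset (Fin n)) :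
    (A ∩ tog x S).card % 2 = ((A ∩ S).card + 1) % 2 := by
  unfold tog
  by_cases h : x ∈ S
  · rw [if_pos h]
    have h1 : A ∩ S.erase x = (A ∩ S).erase x := by
      ext y; simp only [Finset.mem_inter, Finset.mem_erase]; tauto
    have hm : x ∈ A ∩ S := Finset.mem_inter.mpr ⟨hx, h⟩
    have hpos : 1 ≤ (A ∩ S).card := Finset.card_pos.mpr ⟨x, hm⟩
    rw [h1, Finset.card_erase_of_mem hm]
    omega
  · rw [if_neg h]
    have h1 : A ∩ insert x S = insert x (A ∩ S) := by
      ext y; simp only [Finset.mem_inter, Finset.mem_insert]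
      constructor
      · rintro ⟨hy, (rfl | hy')⟩
        · exact Or.inl rfl
        · exact Or.inr ⟨hy, hy'⟩
      · rintro (rfl | ⟨hy, hy'⟩)
        · exact ⟨hx, Or.inl rfl⟩
        · exact ⟨hy, Or.inr hy'⟩
    have hm : x ∉ A ∩ S := fun hc => h (Finset.mem_inter.mp hc).2
    rw [h1, Finset.card_insert_of_notMem hm]

/-- parity change of `|A ∩ S|` under the swap `S ↦ insert k (S.erase j)`, when exactly one
of `j`, `k` lies in `A`. -/
lemma parity_swap {j k : Fin n} {A : Finset (Fin n)} (hjk : j ≠ k)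
    (hone : ¬(j ∈ A ↔ k ∈ A)) {S : Finset (Fin n)} (hj : j ∈ S) (hk : k ∉ S) :
    (A ∩ insert k (S.erase j)).card % 2 = ((A ∩ S).card + 1) % 2 := by
  by_cases hjA : j ∈ A
  · have hkA : k ∉ A := fun h => hone ⟨fun _ => h, fun _ => hjA⟩
    have h1 : A ∩ insert k (S.erase j) = (A ∩ S).erase j := by
      ext y
      simp only [Finset.mem_inter, Finset.mem_insert, Finset.mem_erase]
      constructor
      · rintro ⟨hyA, (rfl | ⟨hyj, hyS⟩)⟩
        · exact absurd hyA hkA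
        · exact ⟨hyj, hyA, hyS⟩
      · rintro ⟨hyj, hyA, hyS⟩
        exact ⟨hyA, Or.inr ⟨hyj, hyS⟩⟩
    have hm : j ∈ A ∩ S := Finset.mem_inter.mpr ⟨hjA, hj⟩
    have hpos : 1 ≤ (A ∩ S).card := Finset.card_pos.mpr ⟨j, hm⟩
    rw [h1, Finset.card_erase_of_mem hm]
    omega
  · have hkA : k ∈ A := by
      by_contra hkA
      exact hone ⟨fun h => absurd h hjA, fun h => absurd h hkA⟩
    have h1 : A ∩ insert k (S.erase j) = insert k (A ∩ S) := by
      ext y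
      simp only [Finset.mem_inter, Finset.mem_insert, Finset.mem_erase]
      constructor
      · rintro ⟨hyA, (rfl | ⟨hyj, hyS⟩)⟩
        · exact Or.inl rfl
        · exact Or.inr ⟨hyA, hyS⟩
      · rintro (rfl | ⟨hyA, hyS⟩)
        · exact ⟨hkA, Or.inl rfl⟩
        · refine ⟨hyA, Or.inr ⟨fun hyj => ?_, hyS⟩⟩
          subst hyj; exact hjA hyA
    have hm : k ∉ A ∩ S := fun hc => hk (Finset.mem_inter.mp hc).2
    rw [h1, Finset.card_insert_of_notMem hm]

/-- equality of `|A ∩ S|` parity under the swap, when `j`, `k` both in or both out of `A`. -/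
lemma parity_swap_eq {j k : Fin n} {A : Finset (Fin n)} (hjk : j ≠ k)
    (hiff : j ∈ A ↔ k ∈ A) {S : Finset (Fin n)} (hj : j ∈ S) (hk : k ∉ S) :
    (A ∩ insert k (S.erase j)).card = (A ∩ S).card := by
  by_cases hjA : j ∈ A
  · have hkA : k ∈ A := hiff.mp hjA
    have h1 : A ∩ insert k (S.erase j) = insert k ((A ∩ S).erase j) := by
      ext y
      simp only [Finset.mem_inter, Finset.mem_insert, Finset.mem_erase]
      constructor
      · rintro ⟨hyA, (rfl | ⟨hyj, hyS⟩)⟩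
        · exact Or.inl rfl
        · exact Or.inr ⟨hyj, hyA, hyS⟩
      · rintro (rfl | ⟨hyj, hyA, hyS⟩)
        · exact ⟨hkA, Or.inl rfl⟩
        · exact ⟨hyA, Or.inr ⟨hyj, hyS⟩⟩
    have hm : j ∈ A ∩ S := Finset.mem_inter.mpr ⟨hjA, hj⟩
    have hpos : 1 ≤ (A ∩ S).card := Finset.card_pos.mpr ⟨j, hm⟩
    have hm2 : k ∉ (A ∩ S).erase j := by
      simp only [Finset.mem_erase, Finset.mem_inter]
      exact fun hc => hk hc.2.2
    rw [h1, Finset.card_insert_of_notMem hm2, Finset.card_erase_of_mem hm]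
    omega
  · have hkA : k ∉ A := fun h => hjA (hiff.mpr h)
    have h1 : A ∩ insert k (S.erase j) = A ∩ S := by
      ext y
      simp only [Finset.mem_inter, Finset.mem_insert, Finset.mem_erase]
      constructor
      · rintro ⟨hyA, (rfl | ⟨hyj, hyS⟩)⟩
        · exact absurd hyA hkA
        · exact ⟨hyA, hyS⟩
      · rintro ⟨hyA, hyS⟩
        refine ⟨hyA, Or.inr ⟨fun hyj => ?_, hyS⟩⟩
        subst hyj; exact hjA hyA
    rw [h1]

lemma num (p : TIdx n) {i j k l : Fin n} (hij : i ≠ j) (hik : i ≠ k) (hil : i ≠ l)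
    (hjk : j ≠ k) (hjl : j ≠ l) (hkl : k ≠ l) :
    ∑ S : Finset (Fin n), (if i ∈ S ∧ j ∈ S ∧ k ∉ S ∧ l ∉ S then chi n p S else 0)
      = ∑ S : Finset (Fin n), (if i ∈ S ∧ k ∈ S ∧ j ∉ S ∧ l ∉ S then chi n p S else 0) := by
  classical
  rw [← Finset.sum_filter, ← Finset.sum_filter]
  by_cases hcase : p.1.1 = n ∨ (j ∈ p.1.2 ↔ k ∈ p.1.2)
  · -- plain swap bijection
    refine Finset.sum_nbij' (fun S => insert k (S.erase j)) (fun S => insert j (S.erase k))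
      ?_ ?_ ?_ ?_ ?_
    · intro S hS
      simp only [Finset.mem_filter, Finset.mem_univ, true_and] at hS ⊢
      obtain ⟨hi, hj, hk, hl⟩ := hS
      refine ⟨?_, ?_, ?_, ?_⟩
      · simp only [Finset.mem_insert, Finset.mem_erase]
        exact Or.inr ⟨hij, hi⟩
      · simp
      · simp only [Finset.mem_insert, Finset.mem_erase]
        rintro (rfl | ⟨hyj, _⟩)
        · exact hjk rfl
        · exact hyj rfl
      · simp only [Finset.mem_insert, Finset.mem_erase]
        rintro (rfl | ⟨_, hyS⟩)
        · exact hkl rfl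
        · exact hl hyS
    · intro S hS
      simp only [Finset.mem_filter, Finset.mem_univ, true_and] at hS ⊢
      obtain ⟨hi, hk, hj, hl⟩ := hS
      refine ⟨?_, ?_, ?_, ?_⟩
      · simp only [Finset.mem_insert, Finset.mem_erase]
        exact Or.inr ⟨hik, hi⟩
      · simp
      · simp only [Finset.mem_insert, Finset.mem_erase]
        rintro (rfl | ⟨hyk, _⟩)
        · exact hjk rfl
        · exact hyk rfl
      · simp only [Finset.mem_insert, Finset.mem_erase]
        rintro (rfl | ⟨_, hyS⟩)
        · exact hjl rfl
        · exact hl hyS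
    · intro S hS
      simp only [Finset.mem_filter, Finset.mem_univ, true_and] at hS
      obtain ⟨hi, hj, hk, hl⟩ := hS
      have h1 : (insert k (S.erase j)).erase k = S.erase j := by
        apply Finset.erase_insert
        simp only [Finset.mem_erase]
        exact fun hc => hk hc.2
      simp only [h1, Finset.insert_erase hj]
    · intro S hS
      simp only [Finset.mem_filter, Finset.mem_univ, true_and] at hS
      obtain ⟨hi, hk, hj, hl⟩ := hS
      have h1 : (insert j (S.erase k)).erase j = S.erase k := by
        apply Finset.erase_insert
        simp only [Finset.mem_erase]
        exact fun hc => hj hc.2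
      simp only [h1, Finset.insert_erase hk]
    · intro S hS
      simp only [Finset.mem_filter, Finset.mem_univ, true_and] at hS
      obtain ⟨hi, hj, hk, hl⟩ := hS
      unfold chi
      by_cases hpn : p.1.1 = n
      · rw [if_pos hpn, if_pos hpn]
      · rcases hcase with hpn' | hiff
        · exact absurd hpn' hpn
        rw [if_neg hpn, if_neg hpn, parity_swap_eq hjk hiff hj hk]
  · -- swap + toggle bijection
    rw [not_or] at hcase
    obtain ⟨hpn, hone⟩ := hcase
    set A := p.1.2 with hA
    have h4A : 4 ≤ A.card := by
      rw [p.2.2.2.2]; exact p.2.2.1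
    have hxe : (A \ {i, j, k, l}).Nonempty := by
      rw [Finset.nonempty_iff_ne_empty]
      intro h0
      have hsub : A ⊆ {i, j, k, l} := by
        intro y hy
        by_contra hy'
        have hmem : y ∈ A \ ({i, j, k, l} : Finset (Fin n)) :=
          Finset.mem_sdiff.mpr ⟨hy, hy'⟩
        rw [h0] at hmem
        exact absurd hmem (Finset.notMem_empty y)
      have hc4 : ({i, j, k, l} : Finset (Fin n)).card ≤ 4 := by
        apply le_trans (Finset.card_insert_le _ _)
        apply Nat.succ_le_succ
        apply le_trans (Finset.card_insert_le _ _)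
        apply Nat.succ_le_succ
        apply le_trans (Finset.card_insert_le _ _)
        apply Nat.succ_le_succ
        simp
      have hAeq : A = {i, j, k, l} :=
        Finset.eq_of_subset_of_card_le hsub (le_trans hc4 h4A)
      apply hone
      constructor
      · intro _; rw [hAeq]; simp
      · intro _; rw [hAeq]; simp
    obtain ⟨x, hx⟩ := hxe
    rw [Finset.mem_sdiff] at hx
    obtain ⟨hxA, hxn⟩ := hx
    simp only [Finset.mem_insert, Finset.mem_singleton, not_or] at hxn
    obtain ⟨hxi, hxj, hxk, hxl⟩ := hxn
    refine Finset.sum_nbij' (fun S => tog x (insert k (S.erase j)))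
      (fun S => insert j ((tog x S).erase k)) ?_ ?_ ?_ ?_ ?_
    · intro S hS
      simp only [Finset.mem_filter, Finset.mem_univ, true_and] at hS ⊢
      obtain ⟨hi, hj, hk, hl⟩ := hS
      refine ⟨?_, ?_, ?_, ?_⟩
      · rw [mem_tog _ (Ne.symm hxi)]
        simp only [Finset.mem_insert, Finset.mem_erase]
        exact Or.inr ⟨hij, hi⟩
      · rw [mem_tog _ (Ne.symm hxk)]
        simp
      · rw [mem_tog _ (Ne.symm hxj)]
        simp only [Finset.mem_insert, Finset.mem_erase]
        rintro (rfl | ⟨hyj, _⟩)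
        · exact hjk rfl
        · exact hyj rfl
      · rw [mem_tog _ (Ne.symm hxl)]
        simp only [Finset.mem_insert, Finset.mem_erase]
        rintro (rfl | ⟨_, hyS⟩)
        · exact hkl rfl
        · exact hl hyS
    · intro S hS
      simp only [Finset.mem_filter, Finset.mem_univ, true_and] at hS ⊢
      obtain ⟨hi, hk, hj, hl⟩ := hS
      refine ⟨?_, ?_, ?_, ?_⟩
      · simp only [Finset.mem_insert, Finset.mem_erase]
        refine Or.inr ⟨hik, ?_⟩
        rw [mem_tog _ (Ne.symm hxi)]
        exact hi
      · simp
      · simp only [Finset.mem_insert, Finset.mem_erase]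
        rintro (rfl | ⟨hkk, _⟩)
        · exact hjk rfl
        · exact hkk rfl
      · simp only [Finset.mem_insert, Finset.mem_erase]
        rintro (rfl | ⟨_, hyS⟩)
        · exact hjl rfl
        · rw [mem_tog _ (Ne.symm hxl)] at hyS
          exact hl hyS
    · intro S hS
      simp only [Finset.mem_filter, Finset.mem_univ, true_and] at hS
      obtain ⟨hi, hj, hk, hl⟩ := hS
      have h0 : k ∉ S.erase j := by
        simp only [Finset.mem_erase]
        exact fun hc => hk hc.2
      simp only [tog_tog, Finset.erase_insert h0, Finset.insert_erase hj]
    · intro S hS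
      simp only [Finset.mem_filter, Finset.mem_univ, true_and] at hS
      obtain ⟨hi, hk, hj, hl⟩ := hS
      have h0 : j ∉ (tog x S).erase k := by
        simp only [Finset.mem_erase]
        intro hc
        rw [mem_tog _ (Ne.symm hxj)] at hc
        exact hj hc.2
      have h1 : k ∈ tog x S := by
        rw [mem_tog _ (Ne.symm hxk)]
        exact hk
      simp only [Finset.erase_insert h0, Finset.insert_erase h1, tog_tog]
    · intro S hS
      simp only [Finset.mem_filter, Finset.mem_univ, true_and] at hS
      obtain ⟨hi, hj, hk, hl⟩ := hS
      unfold chi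
      rw [if_neg hpn, if_neg hpn]
      have h1 := parity_tog hxA (insert k (S.erase j))
      have h2 := parity_swap hjk hone hj hk
      have h3 : (A ∩ tog x (insert k (S.erase j))).card % 2 = (A ∩ S).card % 2 := by
        rw [hA] at h1 h2 ⊢
        omega
      rw [h3]

end KeelAux
namespace KeelAux

variable {n : ℕ}

lemma rowF_apply (S : Finset (Fin n)) (p : TIdx n) : rowF n S p = chi n p S := by
  unfold rowF
  rw [Finsupp.finset_sum_apply]
  have : ∀ q : TIdx n, (Finsupp.single q (chi n q S)) p = if q = p then chi n q S else 0 := by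
    intro q; rw [Finsupp.single_apply]
  rw [Finset.sum_congr rfl fun q _ => this q]
  rw [Finset.sum_ite_eq' Finset.univ p (fun q => chi n q S)]
  simp

lemma cond_bounds {i j k l : Fin n} (hij : i ≠ j) (hkl : k ≠ l) {S : Finset (Fin n)}
    (hi : i ∈ S) (hj : j ∈ S) (hk : k ∉ S) (hl : l ∉ S) :
    2 ≤ S.card ∧ S.card ≤ n - 2 := by
  constructor
  · have hsub : ({i, j} : Finset (Fin n)) ⊆ S := by
      simp [Finset.insert_subset_iff, hi, hj]
    have := Finset.card_le_card hsub
    rwa [Finset.card_pair hij] at this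
  · have hsub : S ⊆ Finset.univ \ ({k, l} : Finset (Fin n)) := by
      intro y hy
      simp only [Finset.mem_sdiff, Finset.mem_univ, true_and, Finset.mem_insert,
        Finset.mem_singleton]
      rintro (rfl | rfl)
      · exact hk hy
      · exact hl hy
    have := Finset.card_le_card hsub
    rwa [Finset.card_sdiff_of_subset (Finset.subset_univ _), Finset.card_univ, Fintype.card_fin,
      Finset.card_pair hkl] at this

lemma sum_bidx_cond {M : Type*} [AddCommMonoid M] {i j k l : Fin n} (hij : i ≠ j)
    (hkl : k ≠ l) (f : Finset (Fin n) → M) :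
    (∑ I : BIdx n, if i ∈ I.1 ∧ j ∈ I.1 ∧ k ∉ I.1 ∧ l ∉ I.1 then f I.1 else 0)
      = ∑ S : Finset (Fin n), (if i ∈ S ∧ j ∈ S ∧ k ∉ S ∧ l ∉ S then f S else 0) := by
  classical
  rw [sum_bidx (fun S => if i ∈ S ∧ j ∈ S ∧ k ∉ S ∧ l ∉ S then f S else 0)]
  apply Finset.sum_congr rfl
  intro S _
  by_cases hP : i ∈ S ∧ j ∈ S ∧ k ∉ S ∧ l ∉ S
  · rw [if_pos (cond_bounds hij hkl hP.1 hP.2.1 hP.2.2.1 hP.2.2.2)]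
  · rw [if_neg hP, ite_self]

lemma phi_relations (r : BIdx n →₀ ℚ) (hr : r ∈ keelRelations n) : phiMap n r = 0 := by
  classical
  rcases hr with ⟨I, J, hJ, rfl⟩ | ⟨i, j, k, l, hij, hik, hil, hjk, hjl, hkl, rfl⟩
  · rw [map_sub, phi_single, phi_single, one_smul, one_smul]
    have : rowF n J.1 = rowF n I.1 := by
      rw [hJ]
      unfold rowF
      exact Finset.sum_congr rfl fun p _ => by rw [chi_compl]
    rw [this, sub_self]
  · rw [map_sub, map_sum, map_sum, sub_eq_zero]
    have e1 : ∀ (I : BIdx n),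
        phiMap n (if i ∈ I.1 ∧ j ∈ I.1 ∧ k ∉ I.1 ∧ l ∉ I.1 then Finsupp.single I (1 : ℚ) else 0)
          = (if i ∈ I.1 ∧ j ∈ I.1 ∧ k ∉ I.1 ∧ l ∉ I.1 then rowF n I.1 else 0) := by
      intro I
      split_ifs with h
      · rw [phi_single, one_smul]
      · rw [map_zero]
    have e2 : ∀ (I : BIdx n),
        phiMap n (if i ∈ I.1 ∧ k ∈ I.1 ∧ j ∉ I.1 ∧ l ∉ I.1 then Finsupp.single I (1 : ℚ) else 0)
          = (if i ∈ I.1 ∧ k ∈ I.1 ∧ j ∉ I.1 ∧ l ∉ I.1 then rowF n I.1 else 0) := by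
      intro I
      split_ifs with h
      · rw [phi_single, one_smul]
      · rw [map_zero]
    rw [Finset.sum_congr rfl fun I _ => e1 I, Finset.sum_congr rfl fun I _ => e2 I]
    ext p
    rw [Finsupp.finset_sum_apply, Finsupp.finset_sum_apply]
    have e3 : ∀ (I : BIdx n),
        (if i ∈ I.1 ∧ j ∈ I.1 ∧ k ∉ I.1 ∧ l ∉ I.1 then rowF n I.1 else 0) p
          = (if i ∈ I.1 ∧ j ∈ I.1 ∧ k ∉ I.1 ∧ l ∉ I.1 then chi n p I.1 else 0) := by
      intro I
      split_ifs with h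
      · rw [rowF_apply]
      · rfl
    have e4 : ∀ (I : BIdx n),
        (if i ∈ I.1 ∧ k ∈ I.1 ∧ j ∉ I.1 ∧ l ∉ I.1 then rowF n I.1 else 0) p
          = (if i ∈ I.1 ∧ k ∈ I.1 ∧ j ∉ I.1 ∧ l ∉ I.1 then chi n p I.1 else 0) := by
      intro I
      split_ifs with h
      · rw [rowF_apply]
      · rfl
    rw [Finset.sum_congr rfl fun I _ => e3 I, Finset.sum_congr rfl fun I _ => e4 I]
    rw [sum_bidx_cond hij hkl (chi n p), sum_bidx_cond hik hjl (chi n p)]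
    exact num p hij hik hil hjk hjl hkl

lemma keelSub_le_ker : keelSub n ≤ LinearMap.ker (phiMap n) := by
  rw [keelSub, Submodule.span_le]
  intro r hr
  rw [SetLike.mem_coe, LinearMap.mem_ker]
  exact phi_relations r hr

end KeelAux
namespace KeelAux

variable {n : ℕ}

lemma npow_parity {a b : ℕ} (h : a % 2 = b % 2) : (-1 : ℚ) ^ a = (-1 : ℚ) ^ b := by
  rcases Nat.even_or_odd a with ha | ha
  · have hb : Even b := by rw [Nat.even_iff] at *; omega
    rw [ha.neg_one_pow, hb.neg_one_pow]
  · have hb : Odd b := by rw [Nat.odd_iff] at *; omega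
    rw [ha.neg_one_pow, hb.neg_one_pow]

lemma ker_row (p : TIdx n) (B : Finset (Fin n)) :
    ∑ S : Finset (Fin n), chi n p S * (-1 : ℚ) ^ ((B ∩ S).card)
      = if p.1.1 = n then (if B = ∅ then (2 : ℚ) ^ n else 0)
        else ((if B = ∅ then (2 : ℚ) ^ n else 0)
          - (if B = p.1.2 then (2 : ℚ) ^ n else 0)) / 2 := by
  classical
  unfold chi
  by_cases hpn : p.1.1 = n
  · rw [if_pos hpn]
    simp only [if_pos hpn, one_mul]
    exact sum_sgn B
  · rw [if_neg hpn]
    simp only [if_neg hpn]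
    set A := p.1.2 with hA
    have hpt : ∀ S : Finset (Fin n),
        (if (A ∩ S).card % 2 = 1 then (1 : ℚ) else 0) * (-1 : ℚ) ^ ((B ∩ S).card)
          = ((-1 : ℚ) ^ ((B ∩ S).card)
            - (-1 : ℚ) ^ ((A ∩ S).card) * (-1 : ℚ) ^ ((B ∩ S).card)) / 2 := by
      intro S
      by_cases hpar : (A ∩ S).card % 2 = 1
      · rw [if_pos hpar, one_mul]
        have h1 : (-1 : ℚ) ^ ((A ∩ S).card) = -1 := Odd.neg_one_pow (Nat.odd_iff.mpr hpar)
        rw [h1]; ring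
      · rw [if_neg hpar, zero_mul]
        have h1 : (-1 : ℚ) ^ ((A ∩ S).card) = 1 :=
          Even.neg_one_pow (Nat.even_iff.mpr (by omega))
        rw [h1]; ring
    rw [Finset.sum_congr rfl fun S _ => hpt S]
    rw [← Finset.sum_div, Finset.sum_sub_distrib, sum_sgn]
    have h2 := sum_sgn_two A B
    rw [h2]
    have h3 : (if A = B then (2 : ℚ) ^ n else 0) = (if B = A then (2 : ℚ) ^ n else 0) := by
      by_cases h : A = B
      · rw [if_pos h, if_pos h.symm]
      · rw [if_neg h, if_neg fun hc => h hc.symm]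
    rw [h3]

lemma sum_specials (hn : 4 ≤ n) (f : Finset (Fin n) → ℚ)
    (hmid : ∀ S : Finset (Fin n), 2 ≤ S.card → S.card ≤ n - 2 → f S = 0) :
    ∑ S : Finset (Fin n), f S
      = f ∅ + f Finset.univ + (∑ m : Fin n, f {m}) + (∑ m : Fin n, f {m}ᶜ) := by
  classical
  have hsplit : ∀ S : Finset (Fin n), f S
      = (if S = ∅ then f S else 0) + (if S = Finset.univ then f S else 0)
        + (if S.card = 1 then f S else 0) + (if S.card = n - 1 then f S else 0) := by
    intro S
    have hcard : S.card ≤ n := card_le_n S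
    have hcuniv : (Finset.univ : Finset (Fin n)).card = n := by
      rw [Finset.card_univ, Fintype.card_fin]
    by_cases h0 : S = ∅
    · subst h0
      rw [if_pos rfl, if_neg, if_neg, if_neg]
      · ring
      · simp only [Finset.card_empty]; omega
      · simp only [Finset.card_empty]; omega
      · intro h
        have := congrArg Finset.card h
        rw [Finset.card_empty, hcuniv] at this
        omega
    · by_cases h1 : S = Finset.univ
      · subst h1
        rw [if_neg h0, if_pos rfl, if_neg, if_neg]
        · ring
        · omega
        · omega
      · rw [if_neg h0, if_neg h1]
        by_cases h2 : S.card = 1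
        · rw [if_pos h2, if_neg]
          · ring
          · omega
        · rw [if_neg h2]
          by_cases h3 : S.card = n - 1
          · rw [if_pos h3]; ring
          · rw [if_neg h3]
            have hc0 : S.card ≠ 0 := fun h => h0 (Finset.card_eq_zero.mp h)
            have hcn : S.card ≠ n := by
              intro h
              apply h1
              rw [← Finset.card_eq_iff_eq_univ, Fintype.card_fin]
              exact h
            rw [hmid S (by omega) (by omega)]
            ring
  rw [Finset.sum_congr rfl fun S _ => hsplit S]
  rw [Finset.sum_add_distrib, Finset.sum_add_distrib, Finset.sum_add_distrib]
  congr 1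
  congr 1
  congr 1
  · rw [Finset.sum_ite_eq' Finset.univ ∅ f]
    simp
  · rw [Finset.sum_ite_eq' Finset.univ Finset.univ f]
    simp
  · rw [← Finset.sum_filter]
    have himg : Finset.univ.filter (fun S : Finset (Fin n) => S.card = 1)
        = Finset.univ.image (fun m : Fin n => ({m} : Finset (Fin n))) := by
      ext S
      simp only [Finset.mem_filter, Finset.mem_univ, true_and, Finset.mem_image,
        Finset.card_eq_one]
      constructor
      · rintro ⟨a, rfl⟩; exact ⟨a, rfl⟩
      · rintro ⟨a, rfl⟩; exact ⟨a, rfl⟩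
    rw [himg, Finset.sum_image]
    intro a _ b _ h
    exact Finset.singleton_injective h
  · rw [← Finset.sum_filter]
    have himg : Finset.univ.filter (fun S : Finset (Fin n) => S.card = n - 1)
        = Finset.univ.image (fun m : Fin n => ({m}ᶜ : Finset (Fin n))) := by
      ext S
      simp only [Finset.mem_filter, Finset.mem_univ, true_and, Finset.mem_image]
      constructor
      · intro h
        have hcc : Sᶜ.card = 1 := by
          rw [Finset.card_compl, Fintype.card_fin, h]
          omega
        obtain ⟨a, ha⟩ := Finset.card_eq_one.mp hcc
        refine ⟨a, ?_⟩
        rw [← ha, compl_compl]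
      · rintro ⟨a, rfl⟩
        rw [Finset.card_compl, Fintype.card_fin, Finset.card_singleton]
    rw [himg, Finset.sum_image]
    intro a _ b _ h
    have := congrArg compl h
    rw [compl_compl, compl_compl] at this
    exact Finset.singleton_injective this

end KeelAux
namespace KeelAux

variable {n : ℕ}

/-- the function `u` attached to a vector of row coefficients. -/
noncomputable def usum (n : ℕ) (c : TIdx n → ℚ) (S : Finset (Fin n)) : ℚ :=
  ∑ p : TIdx n, c p * chi n p S

lemma rows_indep (hn : 4 ≤ n) (c : TIdx n → ℚ)
    (hc : ∀ I : BIdx n, (∑ p : TIdx n, c p * chi n p I.1) = 0) :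
    ∀ p, c p = 0 := by
  classical
  have hu0 : ∀ S : Finset (Fin n), 2 ≤ S.card → S.card ≤ n - 2 → usum n c S = 0 := by
    intro S h1 h2
    exact hc ⟨S, h1, h2⟩
  have hucompl : ∀ S, usum n c Sᶜ = usum n c S := by
    intro S
    unfold usum
    exact Finset.sum_congr rfl fun p _ => by rw [chi_compl]
  have huuniv : usum n c Finset.univ = usum n c ∅ := by
    have := hucompl ∅
    rwa [Finset.compl_empty] at this
  have hW1 : ∀ B : Finset (Fin n),
      ∑ S : Finset (Fin n), usum n c S * (-1 : ℚ) ^ ((B ∩ S).card)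
        = ∑ p : TIdx n, c p *
          (if p.1.1 = n then (if B = ∅ then (2 : ℚ) ^ n else 0)
            else ((if B = ∅ then (2 : ℚ) ^ n else 0)
              - (if B = p.1.2 then (2 : ℚ) ^ n else 0)) / 2) := by
    intro B
    have h1 : ∀ S, usum n c S * (-1 : ℚ) ^ ((B ∩ S).card)
        = ∑ p : TIdx n, c p * (chi n p S * (-1 : ℚ) ^ ((B ∩ S).card)) := by
      intro S
      unfold usum
      rw [Finset.sum_mul]
      exact Finset.sum_congr rfl fun p _ => by ring
    rw [Finset.sum_congr rfl fun S _ => h1 S, Finset.sum_comm]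
    exact Finset.sum_congr rfl fun p _ => by rw [← Finset.mul_sum, ker_row]
  have hW2 : ∀ B : Finset (Fin n), B.card % 2 = 0 →
      ∑ S : Finset (Fin n), usum n c S * (-1 : ℚ) ^ ((B ∩ S).card)
        = 2 * usum n c ∅
          + 2 * ((∑ m : Fin n, usum n c {m}) - 2 * ∑ m ∈ B, usum n c {m}) := by
    intro B hB
    rw [sum_specials hn _ (fun S h1 h2 => by rw [hu0 S h1 h2, zero_mul])]
    have e0 : usum n c ∅ * (-1 : ℚ) ^ ((B ∩ (∅ : Finset (Fin n))).card) = usum n c ∅ := by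
      rw [Finset.inter_empty, Finset.card_empty, pow_zero, mul_one]
    have e1 : usum n c Finset.univ * (-1 : ℚ) ^ ((B ∩ Finset.univ).card) = usum n c ∅ := by
      rw [Finset.inter_univ, huuniv]
      have h : (-1 : ℚ) ^ B.card = 1 := Even.neg_one_pow (Nat.even_iff.mpr hB)
      rw [h, mul_one]
    have e2 : ∀ m : Fin n, usum n c ({m} : Finset (Fin n)) * (-1 : ℚ) ^ ((B ∩ {m}).card)
        = usum n c {m} - (if m ∈ B then 2 * usum n c {m} else 0) := by
      intro m
      by_cases hm : m ∈ B
      · have h : B ∩ {m} = {m} := by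
          ext y
          simp only [Finset.mem_inter, Finset.mem_singleton]
          constructor
          · exact fun h => h.2
          · rintro rfl; exact ⟨hm, rfl⟩
        rw [h, if_pos hm, Finset.card_singleton, pow_one]
        ring
      · have h : B ∩ {m} = ∅ := by
          ext y
          simp only [Finset.mem_inter, Finset.mem_singleton, Finset.notMem_empty, iff_false,
            not_and]
          rintro hy rfl
          exact hm hy
        rw [h, if_neg hm, Finset.card_empty, pow_zero]
        ring
    have e3 : ∀ m : Fin n, usum n c ({m}ᶜ : Finset (Fin n)) * (-1 : ℚ) ^ ((B ∩ {m}ᶜ).card)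
        = usum n c {m} - (if m ∈ B then 2 * usum n c {m} else 0) := by
      intro m
      rw [hucompl]
      have hpow : (-1 : ℚ) ^ ((B ∩ ({m}ᶜ : Finset (Fin n))).card)
          = (-1 : ℚ) ^ ((B ∩ ({m} : Finset (Fin n))).card) := by
        apply npow_parity
        have hpart := inter_compl_card B ({m} : Finset (Fin n))
        have hle : (B ∩ ({m} : Finset (Fin n))).card ≤ 1 := by
          refine le_trans (Finset.card_le_card Finset.inter_subset_right) ?_
          simp
        omega
      rw [hpow]
      exact e2 m
    rw [e0, e1, Finset.sum_congr rfl fun m _ => e2 m, Finset.sum_congr rfl fun m _ => e3 m]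
    rw [Finset.sum_sub_distrib]
    have e4 : ∑ m : Fin n, (if m ∈ B then 2 * usum n c {m} else 0)
        = 2 * ∑ m ∈ B, usum n c {m} := by
      rw [Finset.sum_ite_mem, Finset.univ_inter, Finset.mul_sum]
    rw [e4]
    ring
  -- the pair equations
  have hpair : ∀ i j : Fin n, i ≠ j →
      2 * usum n c ∅ + 2 * ((∑ m : Fin n, usum n c {m})
        - 2 * (usum n c {i} + usum n c {j})) = 0 := by
    intro i j hij
    have hz : ∑ S : Finset (Fin n),
        usum n c S * (-1 : ℚ) ^ ((({i, j} : Finset (Fin n)) ∩ S).card) = 0 := by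
      rw [hW1]
      apply Finset.sum_eq_zero
      intro p _
      have hne : ({i, j} : Finset (Fin n)) ≠ ∅ := Finset.insert_ne_empty _ _
      have hne2 : ({i, j} : Finset (Fin n)) ≠ p.1.2 := by
        intro h
        have hcard := congrArg Finset.card h
        rw [Finset.card_pair hij, p.2.2.2.2] at hcard
        have := p.2.2.1
        omega
      rw [if_neg hne, if_neg hne2]
      split_ifs <;> norm_num
    have hw := hW2 ({i, j} : Finset (Fin n)) (by rw [Finset.card_pair hij])
    rw [hz] at hw
    rw [Finset.sum_pair hij] at hw
    linarith
  have hteq : ∀ i j : Fin n, usum n c {i} = usum n c {j} := by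
    intro i j
    by_cases hij : i = j
    · rw [hij]
    · have hex : (Finset.univ \ ({i, j} : Finset (Fin n))).Nonempty := by
        rw [← Finset.card_pos, Finset.card_sdiff_of_subset (Finset.subset_univ _), Finset.card_univ,
          Fintype.card_fin, Finset.card_pair hij]
        omega
      obtain ⟨k, hk⟩ := hex
      rw [Finset.mem_sdiff] at hk
      simp only [Finset.mem_insert, Finset.mem_singleton, not_or] at hk
      obtain ⟨-, hki, hkj⟩ := hk
      have h1 := hpair i k fun h => hki h.symm
      have h2 := hpair j k fun h => hkj h.symm
      linarith
  have hn0 : 0 < n := by omega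
  set i0 : Fin n := ⟨0, by omega⟩ with hi0
  set j0 : Fin n := ⟨1, by omega⟩ with hj0
  have hij0 : i0 ≠ j0 := by
    simp only [hi0, hj0, ne_eq, Fin.mk.injEq]
    omega
  have hT : ∑ m : Fin n, usum n c {m} = (n : ℚ) * usum n c {i0} := by
    rw [Finset.sum_congr rfl fun m _ => hteq m i0, Finset.sum_const, Finset.card_univ,
      Fintype.card_fin, nsmul_eq_mul]
  have hE1 : 2 * usum n c ∅
      + 2 * ((n : ℚ) * usum n c {i0} - 4 * usum n c {i0}) = 0 := by
    have h := hpair i0 j0 hij0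
    rw [hT, hteq j0 i0] at h
    linarith
  have hn4 : (4 : ℚ) ≤ (n : ℚ) := by exact_mod_cast hn
  have ht0 : usum n c {i0} = 0 ∧ usum n c ∅ = 0 := by
    by_cases hpar : n % 2 = 0
    · -- n even: use B = univ
      have hz : ∑ S : Finset (Fin n),
          usum n c S * (-1 : ℚ) ^ (((Finset.univ : Finset (Fin n)) ∩ S).card) = 0 := by
        rw [hW1]
        apply Finset.sum_eq_zero
        intro p _
        have hne : (Finset.univ : Finset (Fin n)) ≠ ∅ := by
          intro h
          have := congrArg Finset.card h
          rw [Finset.card_univ, Fintype.card_fin, Finset.card_empty] at this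
          omega
        by_cases hpn : p.1.1 = n
        · rw [if_pos hpn, if_neg hne, mul_zero]
        · have hne2 : (Finset.univ : Finset (Fin n)) ≠ p.1.2 := by
            intro h
            apply hpn
            have := congrArg Finset.card h
            rw [Finset.card_univ, Fintype.card_fin, p.2.2.2.2] at this
            omega
          rw [if_neg hpn, if_neg hne, if_neg hne2]
          norm_num
      have hw := hW2 Finset.univ (by rw [Finset.card_univ, Fintype.card_fin]; exact hpar)
      rw [hz] at hw
      have hsu : ∑ m ∈ (Finset.univ : Finset (Fin n)), usum n c {m}
          = ∑ m : Fin n, usum n c {m} := rfl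
      rw [hsu, hT] at hw
      -- hw : 0 = 2 u∅ + 2 (n t - 2 n t)
      have ht : usum n c {i0} = 0 := by
        have hq : ((4 : ℚ) * n - 8) * usum n c {i0} = 0 := by linarith
        rcases mul_eq_zero.mp hq with h | h
        · nlinarith
        · exact h
      constructor
      · exact ht
      · rw [ht] at hw
        linarith
    · -- n odd
      have hu_empty : usum n c ∅ = 0 := by
        unfold usum
        apply Finset.sum_eq_zero
        intro p _
        have hpn : p.1.1 ≠ n := by
          intro h
          have := Nat.even_iff.mp p.2.1
          omega
        unfold chi
        rw [if_neg hpn, Finset.inter_empty, Finset.card_empty]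
        norm_num
      have ht : usum n c {i0} = 0 := by
        have hq : ((n : ℚ) - 4) * usum n c {i0} = 0 := by
          rw [hu_empty] at hE1
          linarith
        rcases mul_eq_zero.mp hq with h | h
        · exfalso
          have : (n : ℚ) = 4 := by linarith
          have : n = 4 := by exact_mod_cast this
          omega
        · exact h
      exact ⟨ht, hu_empty⟩
  obtain ⟨ht, hue⟩ := ht0
  have hum : ∀ m : Fin n, usum n c {m} = 0 := fun m => by rw [hteq m i0]; exact ht
  have h2n : (2 : ℚ) ^ n ≠ 0 := pow_ne_zero _ two_ne_zero
  have hE3 : ∀ p : TIdx n, p.1.1 ≠ n → c p = 0 := by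
    intro p0 hp0
    have hBcard : (p0.1.2).card = p0.1.1 := p0.2.2.2.2
    have hBeven : (p0.1.2).card % 2 = 0 := by rw [hBcard]; exact Nat.even_iff.mp p0.2.1
    have hBge : 4 ≤ (p0.1.2).card := by rw [hBcard]; exact p0.2.2.1
    have hne : p0.1.2 ≠ ∅ := by
      intro h
      rw [h, Finset.card_empty] at hBge
      omega
    have hzero : ∑ S : Finset (Fin n),
        usum n c S * (-1 : ℚ) ^ ((p0.1.2 ∩ S).card) = 0 := by
      rw [hW2 p0.1.2 hBeven, hue]
      have hWsum : ∑ m ∈ p0.1.2, usum n c {m} = 0 :=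
        Finset.sum_eq_zero fun m _ => hum m
      rw [hWsum, hT, ht]
      ring
    have hW1' := hW1 p0.1.2
    rw [hzero] at hW1'
    rw [Finset.sum_eq_single p0] at hW1'
    · rw [if_neg hp0, if_neg hne, if_pos rfl] at hW1'
      have : c p0 * ((0 - (2 : ℚ) ^ n) / 2) = 0 := hW1'.symm
      rcases mul_eq_zero.mp this with h | h
      · exact h
      · exfalso
        apply h2n
        linarith
    · intro q _ hq
      by_cases hqn : q.1.1 = n
      · rw [if_pos hqn, if_neg hne, mul_zero]
      · have hne2 : p0.1.2 ≠ q.1.2 := by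
          intro h
          apply hq
          apply Subtype.ext
          have hfst : q.1.1 = p0.1.1 := by rw [← q.2.2.2.2, ← p0.2.2.2.2, h]
          exact Prod.ext hfst h.symm
        rw [if_neg hqn, if_neg hne, if_neg hne2]
        norm_num
    · intro h
      exact absurd (Finset.mem_univ p0) h
  have hE6 : ∀ p : TIdx n, p.1.1 = n → c p = 0 := by
    intro p0 hp0
    have hzero : ∑ S : Finset (Fin n),
        usum n c S * (-1 : ℚ) ^ (((∅ : Finset (Fin n)) ∩ S).card) = 0 := by
      rw [hW2 ∅ (by simp), hue, hT, ht]
      simp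
    have hW1' := hW1 (∅ : Finset (Fin n))
    rw [hzero] at hW1'
    rw [Finset.sum_eq_single p0] at hW1'
    · rw [if_pos hp0, if_pos rfl] at hW1'
      have : c p0 * (2 : ℚ) ^ n = 0 := hW1'.symm
      rcases mul_eq_zero.mp this with h | h
      · exact h
      · exact absurd h h2n
    · intro q _ hq
      by_cases hqn : q.1.1 = n
      · exfalso
        apply hq
        apply Subtype.ext
        have h2 : q.1.2 = Finset.univ := by
          rw [← Finset.card_eq_iff_eq_univ, Fintype.card_fin, q.2.2.2.2]
          exact hqn
        have h3 : p0.1.2 = Finset.univ := by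
          rw [← Finset.card_eq_iff_eq_univ, Fintype.card_fin, p0.2.2.2.2]
          exact hp0
        refine Prod.ext ?_ ?_
        · rw [hqn, hp0]
        · rw [h2, h3]
      · rw [hE3 q hqn, zero_mul]
    · intro h
      exact absurd (Finset.mem_univ p0) h
  intro p
  by_cases hp : p.1.1 = n
  · exact hE6 p hp
  · exact hE3 p hp

end KeelAux
namespace KeelAux

variable {n : ℕ}

lemma pair_inter_card {i j : Fin n} (hij : i ≠ j) (S : Finset (Fin n)) :
    (({i, j} : Finset (Fin n)) ∩ S).card
      = (if i ∈ S then 1 else 0) + (if j ∈ S then 1 else 0) := by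
  by_cases hi : i ∈ S <;> by_cases hj : j ∈ S
  · have h : ({i, j} : Finset (Fin n)) ∩ S = {i, j} := by
      ext y
      simp only [Finset.mem_inter, Finset.mem_insert, Finset.mem_singleton]
      constructor
      · exact fun h => h.1
      · rintro (rfl | rfl)
        · exact ⟨Or.inl rfl, hi⟩
        · exact ⟨Or.inr rfl, hj⟩
    rw [h, Finset.card_pair hij, if_pos hi, if_pos hj]
  · have h : ({i, j} : Finset (Fin n)) ∩ S = {i} := by
      ext y
      simp only [Finset.mem_inter, Finset.mem_insert, Finset.mem_singleton]
      constructor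
      · rintro ⟨(rfl | rfl), hy⟩
        · rfl
        · exact absurd hy hj
      · rintro rfl
        exact ⟨Or.inl rfl, hi⟩
    rw [h, Finset.card_singleton, if_pos hi, if_neg hj]
  · have h : ({i, j} : Finset (Fin n)) ∩ S = {j} := by
      ext y
      simp only [Finset.mem_inter, Finset.mem_insert, Finset.mem_singleton]
      constructor
      · rintro ⟨(rfl | rfl), hy⟩
        · exact absurd hy hi
        · rfl
      · rintro rfl
        exact ⟨Or.inr rfl, hj⟩
    rw [h, Finset.card_singleton, if_neg hi, if_pos hj]
  · have h : ({i, j} : Finset (Fin n)) ∩ S = ∅ := by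
      ext y
      simp only [Finset.mem_inter, Finset.mem_insert, Finset.mem_singleton,
        Finset.notMem_empty, iff_false, not_and]
      rintro (rfl | rfl)
      · exact hi
      · exact hj
    rw [h, Finset.card_empty, if_neg hi, if_neg hj]

/-- the boundary function attached to a linear functional. -/
noncomputable def Gf (n : ℕ) (g : Module.Dual ℚ (BIdx n →₀ ℚ)) (S : Finset (Fin n)) : ℚ :=
  if h : 2 ≤ S.card ∧ S.card ≤ n - 2 then g (Finsupp.single (⟨S, h⟩ : BIdx n) 1) else 0

/-- Fourier coefficients. -/
noncomputable def ghat (n : ℕ) (g : Module.Dual ℚ (BIdx n →₀ ℚ)) (B : Finset (Fin n)) : ℚ :=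
  ∑ S : Finset (Fin n), Gf n g S * (-1 : ℚ) ^ ((B ∩ S).card)

lemma Gf_val (g : Module.Dual ℚ (BIdx n →₀ ℚ)) (I : BIdx n) :
    Gf n g I.1 = g (Finsupp.single I 1) := by
  unfold Gf
  rw [dif_pos I.2]
  congr 1

lemma ann_eliminate (hn : 4 ≤ n) (g : Module.Dual ℚ (BIdx n →₀ ℚ))
    (hrel : ∀ r ∈ keelRelations n, g r = 0)
    (hvan : ∀ B : Finset (Fin n), B.card % 2 = 0 → 4 ≤ B.card → ghat n g B = 0) :
    g = 0 := by
  classical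
  -- complement symmetry
  have hGcompl : ∀ S : Finset (Fin n), Gf n g Sᶜ = Gf n g S := by
    intro S
    have h1 : Sᶜ.card = n - S.card := by
      rw [Finset.card_compl, Fintype.card_fin]
    have h2 := card_le_n S
    have hiff : (2 ≤ Sᶜ.card ∧ Sᶜ.card ≤ n - 2) ↔ (2 ≤ S.card ∧ S.card ≤ n - 2) := by
      rw [h1]
      omega
    unfold Gf
    by_cases h : 2 ≤ S.card ∧ S.card ≤ n - 2
    · rw [dif_pos h, dif_pos (hiff.mpr h)]
      have hr : (Finsupp.single (⟨S, h⟩ : BIdx n) (1 : ℚ)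
          - Finsupp.single (⟨Sᶜ, hiff.mpr h⟩ : BIdx n) 1) ∈ keelRelations n :=
        Or.inl ⟨⟨S, h⟩, ⟨Sᶜ, hiff.mpr h⟩, rfl, rfl⟩
      have h0 := hrel _ hr
      replace h0 : _ = (0 : ℚ) := (map_sub g _ _).symm.trans h0
      exact (sub_eq_zero.mp h0).symm
    · rw [dif_neg h, dif_neg fun hc => h (hiff.mp hc)]
  -- odd Fourier coefficients vanish
  have hodd : ∀ B : Finset (Fin n), B.card % 2 = 1 → ghat n g B = 0 := by
    intro B hB
    have hre : ghat n g B = ∑ S : Finset (Fin n), Gf n g Sᶜ * (-1 : ℚ) ^ ((B ∩ Sᶜ).card) := by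
      unfold ghat
      refine Finset.sum_nbij' (fun S => Sᶜ) (fun S => Sᶜ) ?_ ?_ ?_ ?_ ?_
      · intro S _; exact Finset.mem_univ _
      · intro S _; exact Finset.mem_univ _
      · intro S _; exact compl_compl S
      · intro S _; exact compl_compl S
      · intro S _
        rw [compl_compl]
    have hterm : ∀ S : Finset (Fin n),
        Gf n g Sᶜ * (-1 : ℚ) ^ ((B ∩ Sᶜ).card) = -(Gf n g S * (-1 : ℚ) ^ ((B ∩ S).card)) := by
      intro S
      rw [hGcompl]
      have h1 := inter_compl_card B S
      have h2 : (B ∩ Sᶜ).card % 2 = ((B ∩ S).card + 1) % 2 := by omega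
      rw [npow_parity h2, pow_succ]
      ring
    rw [Finset.sum_congr rfl fun S _ => hterm S] at hre
    rw [Finset.sum_neg_distrib] at hre
    have : ghat n g B = -ghat n g B := hre
    linarith
  -- the 4-point relations
  have hREL : ∀ a b c d : Fin n, a ≠ b → a ≠ c → a ≠ d → b ≠ c → b ≠ d → c ≠ d →
      (∑ S : Finset (Fin n), if a ∈ S ∧ b ∈ S ∧ c ∉ S ∧ d ∉ S then Gf n g S else 0)
        = ∑ S : Finset (Fin n), if a ∈ S ∧ c ∈ S ∧ b ∉ S ∧ d ∉ S then Gf n g S else 0 := by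
    intro a b c d hab hac had hbc hbd hcd
    have hr := hrel _ (Or.inr ⟨a, b, c, d, hab, hac, had, hbc, hbd, hcd, rfl⟩)
    rw [map_sub, map_sum, map_sum] at hr
    have e1 : ∀ I : BIdx n,
        g (if a ∈ I.1 ∧ b ∈ I.1 ∧ c ∉ I.1 ∧ d ∉ I.1 then Finsupp.single I (1 : ℚ) else 0)
          = (if a ∈ I.1 ∧ b ∈ I.1 ∧ c ∉ I.1 ∧ d ∉ I.1 then Gf n g I.1 else 0) := by
      intro I
      split_ifs with h
      · rw [Gf_val]
      · rw [map_zero]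
    have e2 : ∀ I : BIdx n,
        g (if a ∈ I.1 ∧ c ∈ I.1 ∧ b ∉ I.1 ∧ d ∉ I.1 then Finsupp.single I (1 : ℚ) else 0)
          = (if a ∈ I.1 ∧ c ∈ I.1 ∧ b ∉ I.1 ∧ d ∉ I.1 then Gf n g I.1 else 0) := by
      intro I
      split_ifs with h
      · rw [Gf_val]
      · rw [map_zero]
    rw [Finset.sum_congr rfl fun I _ => e1 I, Finset.sum_congr rfl fun I _ => e2 I] at hr
    rw [sum_bidx_cond hab hcd (Gf n g), sum_bidx_cond hac hbd (Gf n g)] at hr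
    linarith
  -- Fourier inversion
  have hINV : ∀ S : Finset (Fin n),
      ∑ B : Finset (Fin n), ghat n g B * (-1 : ℚ) ^ ((B ∩ S).card)
        = 2 ^ n * Gf n g S := by
    intro S
    unfold ghat
    have h1 : ∀ B : Finset (Fin n),
        (∑ T : Finset (Fin n), Gf n g T * (-1 : ℚ) ^ ((B ∩ T).card))
            * (-1 : ℚ) ^ ((B ∩ S).card)
          = ∑ T : Finset (Fin n),
            Gf n g T * ((-1 : ℚ) ^ ((T ∩ B).card) * (-1 : ℚ) ^ ((S ∩ B).card)) := by
      intro B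
      rw [Finset.sum_mul]
      refine Finset.sum_congr rfl fun T _ => ?_
      rw [Finset.inter_comm T B, Finset.inter_comm S B]
      ring
    rw [Finset.sum_congr rfl fun B _ => h1 B, Finset.sum_comm]
    have h2 : ∀ T : Finset (Fin n),
        ∑ B : Finset (Fin n),
            Gf n g T * ((-1 : ℚ) ^ ((T ∩ B).card) * (-1 : ℚ) ^ ((S ∩ B).card))
          = Gf n g T * (if T = S then (2 : ℚ) ^ n else 0) := by
      intro T
      rw [← Finset.mul_sum, sum_sgn_two T S]
    rw [Finset.sum_congr rfl fun T _ => h2 T]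
    have h3 : ∀ T : Finset (Fin n),
        Gf n g T * (if T = S then (2 : ℚ) ^ n else 0)
          = if T = S then Gf n g T * (2 : ℚ) ^ n else 0 := by
      intro T
      split_ifs <;> ring
    rw [Finset.sum_congr rfl fun T _ => h3 T, Finset.sum_ite_eq' Finset.univ S]
    simp [mul_comm]
  have hGe : Gf n g ∅ = 0 := by
    unfold Gf
    rw [dif_neg]
    simp
  have hGm : ∀ m : Fin n, Gf n g {m} = 0 := by
    intro m
    unfold Gf
    rw [dif_neg]
    simp
  -- sum of all Fourier coefficients
  have hall : ∑ B : Finset (Fin n), ghat n g B = 0 := by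
    have := hINV ∅
    simp only [Finset.inter_empty, Finset.card_empty, pow_zero, mul_one, hGe, mul_zero] at this
    exact this
  -- singleton equations
  have hsing : ∀ m : Fin n, ∑ B : Finset (Fin n), (if m ∈ B then ghat n g B else 0) = 0 := by
    intro m
    have h1 := hINV {m}
    rw [hGm m, mul_zero] at h1
    have h2 : ∀ B : Finset (Fin n),
        ghat n g B - ghat n g B * (-1 : ℚ) ^ ((B ∩ {m}).card)
          = if m ∈ B then 2 * ghat n g B else 0 := by
      intro B
      by_cases hm : m ∈ B
      · have h : B ∩ {m} = {m} := by
          ext y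
          simp only [Finset.mem_inter, Finset.mem_singleton]
          constructor
          · exact fun h => h.2
          · rintro rfl; exact ⟨hm, rfl⟩
        rw [h, if_pos hm, Finset.card_singleton, pow_one]
        ring
      · have h : B ∩ {m} = ∅ := by
          ext y
          simp only [Finset.mem_inter, Finset.mem_singleton, Finset.notMem_empty, iff_false,
            not_and]
          rintro hy rfl
          exact hm hy
        rw [h, if_neg hm, Finset.card_empty, pow_zero]
        ring
    have h3 : ∑ B : Finset (Fin n), (if m ∈ B then 2 * ghat n g B else 0) = 0 := by
      rw [← Finset.sum_congr rfl fun B _ => h2 B, Finset.sum_sub_distrib, hall, h1]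
      ring
    have h4 : ∑ B : Finset (Fin n), (if m ∈ B then 2 * ghat n g B else 0)
        = 2 * ∑ B : Finset (Fin n), (if m ∈ B then ghat n g B else 0) := by
      rw [Finset.mul_sum]
      refine Finset.sum_congr rfl fun B _ => ?_
      split_ifs <;> ring
    rw [h4] at h3
    linarith
  -- sums over pairs containing a fixed element
  have hpairsum : ∀ m : Fin n, ∑ x ∈ Finset.univ.erase m, ghat n g {m, x} = 0 := by
    intro m
    have h0 := hsing m
    have h1 : ∀ B : Finset (Fin n), (if m ∈ B then ghat n g B else 0)
        = if B.card = 2 ∧ m ∈ B then ghat n g B else 0 := by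
      intro B
      by_cases hm : m ∈ B
      · by_cases h2 : B.card = 2
        · rw [if_pos hm, if_pos ⟨h2, hm⟩]
        · rw [if_pos hm, if_neg fun hc => h2 hc.1]
          have hc1 : 1 ≤ B.card := Finset.card_pos.mpr ⟨m, hm⟩
          by_cases hp : B.card % 2 = 1
          · exact hodd B hp
          · exact hvan B (by omega) (by omega)
      · rw [if_neg hm, if_neg fun hc => hm hc.2]
    rw [Finset.sum_congr rfl fun B _ => h1 B, ← Finset.sum_filter] at h0
    have himg : Finset.univ.filter (fun B : Finset (Fin n) => B.card = 2 ∧ m ∈ B)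
        = (Finset.univ.erase m).image (fun x => ({m, x} : Finset (Fin n))) := by
      ext B
      simp only [Finset.mem_filter, Finset.mem_univ, true_and, Finset.mem_image,
        Finset.mem_erase]
      constructor
      · rintro ⟨h2, hm⟩
        obtain ⟨a, b, hab, rfl⟩ := Finset.card_eq_two.mp h2
        rcases Finset.mem_insert.mp hm with rfl | hm'
        · exact ⟨b, ⟨fun h => hab h.symm, trivial⟩, rfl⟩
        · rw [Finset.mem_singleton] at hm'
          subst hm'
          exact ⟨a, ⟨hab, trivial⟩, (Finset.pair_comm a m).symm⟩
      · rintro ⟨x, hx, rfl⟩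
        refine ⟨?_, by simp⟩
        exact Finset.card_pair fun h => hx.1 h.symm
    rw [himg, Finset.sum_image ?_] at h0
    · exact h0
    · intro a ha b hb hab
      have hmem : a ∈ ({m, b} : Finset (Fin n)) := by
        rw [← show ({m, a} : Finset (Fin n)) = {m, b} from hab]
        simp
      rcases Finset.mem_insert.mp hmem with h | h
      · exact absurd h (Finset.mem_erase.mp ha).1
      · exact Finset.mem_singleton.mp h
  -- four-term additivity of the pair coefficients
  have hadd : ∀ i j k l : Fin n, i ≠ j → i ≠ k → i ≠ l → j ≠ k → j ≠ l → k ≠ l →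
      ghat n g {i, j} + ghat n g {k, l} = ghat n g {i, k} + ghat n g {j, l} := by
    intro i j k l hij hik hil hjk hjl hkl
    have hterm : ∀ S : Finset (Fin n),
        Gf n g S * (-1 : ℚ) ^ ((({i, j} : Finset (Fin n)) ∩ S).card)
          + Gf n g S * (-1 : ℚ) ^ ((({k, l} : Finset (Fin n)) ∩ S).card)
          - Gf n g S * (-1 : ℚ) ^ ((({i, k} : Finset (Fin n)) ∩ S).card)
          - Gf n g S * (-1 : ℚ) ^ ((({j, l} : Finset (Fin n)) ∩ S).card)
        = 4 * ((if i ∈ S ∧ j ∈ S ∧ k ∉ S ∧ l ∉ S then Gf n g S else 0)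
          + (if k ∈ S ∧ l ∈ S ∧ i ∉ S ∧ j ∉ S then Gf n g S else 0)
          - (if i ∈ S ∧ k ∈ S ∧ j ∉ S ∧ l ∉ S then Gf n g S else 0)
          - (if j ∈ S ∧ l ∈ S ∧ i ∉ S ∧ k ∉ S then Gf n g S else 0)) := by
      intro S
      rw [pair_inter_card hij S, pair_inter_card hkl S, pair_inter_card hik S,
        pair_inter_card hjl S]
      by_cases hi : i ∈ S <;> by_cases hj' : j ∈ S <;> by_cases hk' : k ∈ S <;>
        by_cases hl' : l ∈ S <;>
        simp only [hi, hj', hk', hl', if_true, if_false, not_true_eq_false,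
          not_false_eq_true, true_and, and_true, false_and, and_false, if_neg, if_pos,
          not_true, not_false_iff] <;>
        ring
    have key : ghat n g {i, j} + ghat n g {k, l} - ghat n g {i, k} - ghat n g {j, l}
        = 4 * ((∑ S : Finset (Fin n), if i ∈ S ∧ j ∈ S ∧ k ∉ S ∧ l ∉ S then Gf n g S else 0)
          + (∑ S : Finset (Fin n), if k ∈ S ∧ l ∈ S ∧ i ∉ S ∧ j ∉ S then Gf n g S else 0)
          - (∑ S : Finset (Fin n), if i ∈ S ∧ k ∈ S ∧ j ∉ S ∧ l ∉ S then Gf n g S else 0)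
          - (∑ S : Finset (Fin n), if j ∈ S ∧ l ∈ S ∧ i ∉ S ∧ k ∉ S then Gf n g S else 0)) := by
      unfold ghat
      rw [← Finset.sum_add_distrib, ← Finset.sum_sub_distrib, ← Finset.sum_sub_distrib,
        ← Finset.sum_add_distrib, ← Finset.sum_sub_distrib, ← Finset.sum_sub_distrib,
        Finset.mul_sum]
      exact Finset.sum_congr rfl fun S _ => hterm S
    have r1 := hREL i j k l hij hik hil hjk hjl hkl
    have r2 := hREL k l i j hkl (Ne.symm hik) (Ne.symm hjk) (Ne.symm hil) (Ne.symm hjl) hij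
    have r3 := hREL j l i k hjl (Ne.symm hij) hjk (Ne.symm hil) (Ne.symm hkl) hik
    have br2 : (∑ S : Finset (Fin n), if k ∈ S ∧ i ∈ S ∧ l ∉ S ∧ j ∉ S then Gf n g S else 0)
        = ∑ S : Finset (Fin n), if i ∈ S ∧ k ∈ S ∧ j ∉ S ∧ l ∉ S then Gf n g S else 0 := by
      refine Finset.sum_congr rfl fun S _ => ?_
      exact if_congr (by tauto) rfl rfl
    have br3 : (∑ S : Finset (Fin n), if j ∈ S ∧ i ∈ S ∧ l ∉ S ∧ k ∉ S then Gf n g S else 0)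
        = ∑ S : Finset (Fin n), if i ∈ S ∧ j ∈ S ∧ k ∉ S ∧ l ∉ S then Gf n g S else 0 := by
      refine Finset.sum_congr rfl fun S _ => ?_
      exact if_congr (by tauto) rfl rfl
    rw [br2] at r2
    rw [br3] at r3
    linarith
  -- pairs sharing an element
  have hstep1a : ∀ i j k l : Fin n, i ≠ j → i ≠ k → i ≠ l → j ≠ k → j ≠ l → k ≠ l →
      ghat n g {i, k} - ghat n g {j, k} = ghat n g {i, l} - ghat n g {j, l} := by
    intro i j k l hij hik hil hjk hjl hkl
    have h := hadd i k l j hik hil hij hkl (Ne.symm hjk) (Ne.symm hjl)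
    rw [Finset.pair_comm l j, Finset.pair_comm k j] at h
    linarith
  have hstep1b : ∀ i j k : Fin n, i ≠ j → k ≠ i → k ≠ j →
      ghat n g {i, k} = ghat n g {j, k} := by
    intro i j k hij hki hkj
    have hmemj : j ∈ Finset.univ.erase i := Finset.mem_erase.mpr ⟨Ne.symm hij, Finset.mem_univ j⟩
    have hmemi : i ∈ (Finset.univ.erase j) := Finset.mem_erase.mpr ⟨hij, Finset.mem_univ i⟩
    have hi' := hpairsum i
    have hj' := hpairsum j
    rw [← Finset.sum_erase_add (Finset.univ.erase i) _ hmemj] at hi'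
    rw [← Finset.sum_erase_add (Finset.univ.erase j) _ hmemi] at hj'
    have hE : (Finset.univ.erase j).erase i = (Finset.univ.erase i).erase j := by
      ext y
      simp only [Finset.mem_erase, Finset.mem_univ, and_true]
      tauto
    rw [hE] at hj'
    rw [show ({j, i} : Finset (Fin n)) = {i, j} from Finset.pair_comm j i] at hj'
    have hsub : ∑ x ∈ (Finset.univ.erase i).erase j,
        (ghat n g {i, x} - ghat n g {j, x}) = 0 := by
      rw [Finset.sum_sub_distrib]
      have hpc : ∑ x ∈ (Finset.univ.erase i).erase j, ghat n g {i, x}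
          = ∑ x ∈ (Finset.univ.erase i).erase j, ghat n g {i, x} := rfl
      linarith
    have hconst : ∀ x ∈ (Finset.univ.erase i).erase j,
        ghat n g {i, x} - ghat n g {j, x} = ghat n g {i, k} - ghat n g {j, k} := by
      intro x hx
      rw [Finset.mem_erase] at hx
      obtain ⟨hxj, hx2⟩ := hx
      rw [Finset.mem_erase] at hx2
      obtain ⟨hxi, -⟩ := hx2
      by_cases hxk : x = k
      · rw [hxk]
      · exact hstep1a i j x k hij (Ne.symm hxi) (Ne.symm hki) (Ne.symm hxj) (Ne.symm hkj) hxk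
    rw [Finset.sum_congr rfl hconst, Finset.sum_const] at hsub
    have hcard : ((Finset.univ.erase i).erase j).card = n - 2 := by
      rw [Finset.card_erase_of_mem hmemj, Finset.card_erase_of_mem (Finset.mem_univ i),
        Finset.card_univ, Fintype.card_fin]
      omega
    rw [hcard, nsmul_eq_mul] at hsub
    have hpos : (0 : ℚ) < ((n - 2 : ℕ) : ℚ) := by
      exact_mod_cast (by omega : 0 < n - 2)
    rcases mul_eq_zero.mp hsub with h | h
    · linarith
    · linarith
  have hpz : ∀ i j : Fin n, i ≠ j → ghat n g {i, j} = 0 := by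
    intro i j hij
    have hs := hpairsum i
    have hconst : ∀ x ∈ Finset.univ.erase i, ghat n g {i, x} = ghat n g {i, j} := by
      intro x hx
      rw [Finset.mem_erase] at hx
      by_cases hxj : x = j
      · rw [hxj]
      · rw [Finset.pair_comm i x, Finset.pair_comm i j]
        exact hstep1b x j i hxj (Ne.symm hx.1) hij
    rw [Finset.sum_congr rfl hconst, Finset.sum_const] at hs
    have hcard : (Finset.univ.erase i).card = n - 1 := by
      rw [Finset.card_erase_of_mem (Finset.mem_univ i), Finset.card_univ, Fintype.card_fin]
    rw [hcard, nsmul_eq_mul] at hs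
    have hpos : (0 : ℚ) < ((n - 1 : ℕ) : ℚ) := by
      exact_mod_cast (by omega : 0 < n - 1)
    rcases mul_eq_zero.mp hs with h | h
    · linarith
    · exact h
  have hallzero : ∀ B : Finset (Fin n), ghat n g B = 0 := by
    have hother : ∀ B : Finset (Fin n), B ≠ ∅ → ghat n g B = 0 := by
      intro B hB0
      have hc1 : 1 ≤ B.card := Finset.card_pos.mpr (Finset.nonempty_iff_ne_empty.mpr hB0)
      by_cases hp : B.card % 2 = 1
      · exact hodd B hp
      · by_cases h2 : B.card = 2
        · obtain ⟨a, b, hab, rfl⟩ := Finset.card_eq_two.mp h2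
          exact hpz a b hab
        · exact hvan B (by omega) (by omega)
    intro B
    by_cases hB0 : B = ∅
    · have hrest : ∑ B : Finset (Fin n), ghat n g B = ghat n g ∅ := by
        rw [Finset.sum_eq_single ∅]
        · intro C _ hC
          exact hother C hC
        · intro h
          exact absurd (Finset.mem_univ ∅) h
      rw [hB0]
      linarith [hall, hrest]
    · exact hother B hB0
  have hGzero : ∀ S : Finset (Fin n), Gf n g S = 0 := by
    intro S
    have h := hINV S
    rw [Finset.sum_eq_zero fun B _ => by rw [hallzero B, zero_mul]] at h
    have h2 : (2 : ℚ) ^ n ≠ 0 := pow_ne_zero _ two_ne_zero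
    rcases mul_eq_zero.mp h.symm with h' | h'
    · exact absurd h' h2
    · exact h'
  refine Finsupp.lhom_ext fun I r => ?_
  have hs : Finsupp.single I r = r • Finsupp.single I (1 : ℚ) := by
    rw [Finsupp.smul_single, smul_eq_mul, mul_one]
  rw [hs, map_smul, ← Gf_val g I, hGzero]
  simp

end KeelAux
namespace KeelAux

open Module

variable {n : ℕ}

/-- The Fourier-coefficient map on dual vectors. -/
noncomputable def theta (n : ℕ) :
    Module.Dual ℚ (BIdx n →₀ ℚ) →ₗ[ℚ] (TIdx n → ℚ) where
  toFun g := fun p => ghat n g p.1.2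
  map_add' g h := by
    funext p
    unfold ghat Gf
    simp only [Pi.add_apply]
    rw [← Finset.sum_add_distrib]
    refine Finset.sum_congr rfl fun S _ => ?_
    split_ifs with hS
    · rw [LinearMap.add_apply]
      ring
    · ring
  map_smul' a g := by
    funext p
    unfold ghat Gf
    dsimp only [RingHom.id_apply, Pi.smul_apply, smul_eq_mul]
    rw [Finset.mul_sum]
    refine Finset.sum_congr rfl fun S _ => ?_
    split_ifs with hS
    · rw [LinearMap.smul_apply, smul_eq_mul]
      ring
    · ring

lemma phi_surj (hn : 4 ≤ n) : Function.Surjective (phiMap n) := by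
  classical
  rw [← LinearMap.range_eq_top]
  have hann : (LinearMap.range (phiMap n)).dualAnnihilator = ⊥ := by
    rw [eq_bot_iff]
    intro γ hγ
    rw [Submodule.mem_dualAnnihilator] at hγ
    have hc : ∀ p : TIdx n, γ (Finsupp.single p 1) = 0 := by
      apply rows_indep hn (fun p => γ (Finsupp.single p 1))
      intro I
      have hmem : rowF n I.1 ∈ LinearMap.range (phiMap n) :=
        ⟨Finsupp.single I 1, by rw [phi_single, one_smul]⟩
      have h0 := hγ _ hmem
      unfold rowF at h0
      rw [map_sum] at h0
      have hterm : ∀ p : TIdx n, γ (Finsupp.single p (chi n p I.1))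
          = γ (Finsupp.single p 1) * chi n p I.1 := by
        intro p
        have hs : Finsupp.single p (chi n p I.1)
            = (chi n p I.1) • Finsupp.single p (1 : ℚ) := by
          rw [Finsupp.smul_single, smul_eq_mul, mul_one]
        rw [hs, map_smul, smul_eq_mul]
        ring
      rw [Finset.sum_congr rfl fun p _ => hterm p] at h0
      exact h0
    rw [Submodule.mem_bot]
    refine Finsupp.lhom_ext fun p r => ?_
    have hs : Finsupp.single p r = r • Finsupp.single p (1 : ℚ) := by
      rw [Finsupp.smul_single, smul_eq_mul, mul_one]
    rw [hs, map_smul, hc p]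
    simp
  have hq := Submodule.finrank_quotient_add_finrank (LinearMap.range (phiMap n))
  have he := LinearEquiv.finrank_eq (Subspace.quotEquivAnnihilator (LinearMap.range (phiMap n)))
  rw [hann] at he
  have hb : finrank ℚ (⊥ : Submodule ℚ (Module.Dual ℚ (TIdx n →₀ ℚ))) = 0 := finrank_bot _ _
  rw [hb] at he
  apply Submodule.eq_top_of_finrank_eq
  omega

lemma ker_eq (hn : 4 ≤ n) : keelSub n = LinearMap.ker (phiMap n) := by
  classical
  apply Submodule.eq_of_le_of_finrank_le keelSub_le_ker
  -- ranks
  have hrk := LinearMap.finrank_range_add_finrank_ker (phiMap n)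
  have hrange : finrank ℚ (LinearMap.range (phiMap n)) = finrank ℚ (TIdx n →₀ ℚ) := by
    rw [LinearMap.range_eq_top.mpr (phi_surj hn)]
    exact finrank_top _ _
  have hq := Submodule.finrank_quotient_add_finrank (keelSub n)
  have he := LinearEquiv.finrank_eq (Subspace.quotEquivAnnihilator (keelSub n))
  -- bound the annihilator
  have hinj : Function.Injective ((theta n).comp (keelSub n).dualAnnihilator.subtype) := by
    rw [← LinearMap.ker_eq_bot, LinearMap.ker_eq_bot']
    intro gg hgg
    ext1
    rw [Submodule.coe_zero]
    have hg := gg.2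
    rw [Submodule.mem_dualAnnihilator] at hg
    apply ann_eliminate hn gg.1
    · intro r hr
      exact hg r (Submodule.subset_span hr)
    · intro B heven h4
      have hp : Even (B.card, B).1 ∧ 4 ≤ (B.card, B).1 ∧ (B.card, B).1 ≤ n
          ∧ (B.card, B).2.card = (B.card, B).1 :=
        ⟨Nat.even_iff.mpr heven, h4, card_le_n B, rfl⟩
      have := congrFun hgg (⟨(B.card, B), hp⟩ : TIdx n)
      exact this
  have hbound : finrank ℚ ((keelSub n).dualAnnihilator) ≤ finrank ℚ (TIdx n → ℚ) :=
    LinearMap.finrank_le_finrank_of_injective hinj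
  have hpi : finrank ℚ (TIdx n → ℚ) = Fintype.card (TIdx n) := Module.finrank_pi ℚ
  have hfs : finrank ℚ (TIdx n →₀ ℚ) = Fintype.card (TIdx n) := Module.finrank_finsupp_self ℚ
  omega

/-- the induced equivalence of the index set. -/
def permTIdxEquiv (n : ℕ) (σ : Equiv.Perm (Fin n)) : TIdx n ≃ TIdx n where
  toFun := permTIdx n σ
  invFun := permTIdx n σ⁻¹
  left_inv p := by
    apply Subtype.ext
    unfold permTIdx
    refine Prod.ext rfl ?_
    simp only [Finset.image_image]
    ext y
    simp
  right_inv p := by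
    apply Subtype.ext
    unfold permTIdx
    refine Prod.ext rfl ?_
    simp only [Finset.image_image]
    ext y
    simp

lemma chi_perm (σ : Equiv.Perm (Fin n)) (p : TIdx n) (S : Finset (Fin n)) :
    chi n (permTIdx n σ p) (S.image σ) = chi n p S := by
  unfold chi permTIdx
  by_cases hpn : p.1.1 = n
  · rw [if_pos hpn, if_pos hpn]
  · rw [if_neg hpn, if_neg hpn]
    have h1 : p.1.2.image σ ∩ S.image σ = (p.1.2 ∩ S).image σ :=
      (Finset.image_inter _ _ σ.injective).symm
    rw [h1, Finset.card_image_of_injective _ σ.injective]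

lemma rowF_perm (σ : Equiv.Perm (Fin n)) (S : Finset (Fin n)) :
    rowF n (S.image σ) = Finsupp.mapDomain (permTIdx n σ) (rowF n S) := by
  unfold rowF
  have hR : Finsupp.mapDomain (permTIdx n σ) (∑ p : TIdx n, Finsupp.single p (chi n p S))
      = ∑ p : TIdx n, Finsupp.single (permTIdx n σ p) (chi n p S) := by
    rw [show Finsupp.mapDomain (permTIdx n σ)
        = ⇑(Finsupp.lmapDomain ℚ ℚ (permTIdx n σ)) from rfl, map_sum]
    exact Finset.sum_congr rfl fun p _ => Finsupp.mapDomain_single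
  rw [hR]
  refine (Fintype.sum_equiv (permTIdxEquiv n σ) _ _ ?_).symm
  intro p
  have := chi_perm σ p S
  rw [show permTIdxEquiv n σ p = permTIdx n σ p from rfl, this]

lemma phi_equivariant (σ : Equiv.Perm (Fin n)) (x : BIdx n →₀ ℚ) :
    phiMap n (keelRelabel n σ x) = Finsupp.mapDomain (permTIdx n σ) (phiMap n x) := by
  have hcomp : (phiMap n).comp (keelRelabel n σ)
      = (Finsupp.lmapDomain ℚ ℚ (permTIdx n σ)).comp (phiMap n) := by
    apply Finsupp.lhom_ext
    intro I r
    simp only [LinearMap.comp_apply]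
    rw [show keelRelabel n σ (Finsupp.single I r)
        = Finsupp.single (permBIdx n σ I) r from Finsupp.mapDomain_single]
    rw [phi_single, phi_single, map_smul]
    rw [show (Finsupp.lmapDomain ℚ ℚ (permTIdx n σ)) (rowF n I.1)
        = Finsupp.mapDomain (permTIdx n σ) (rowF n I.1) from rfl]
    rw [show (permBIdx n σ I).1 = I.1.image σ from rfl, rowF_perm]
  have := LinearMap.congr_fun hcomp x
  simpa using this

end KeelAux

/-- for n ≥ 4, the S_n-representation `A¹(M̄_{0,n}) ≅ H²(M̄_{0,n};ℚ)`
(presented à la Keel by boundary divisors and relations) is isomorphic to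
`⊕_{a even, a ≥ 4} U_{a,n−a}` (i.e. its character is `∑_{a even, a ≥ 4} s_{(a)}s_{(n−a)}`
with the convention `s_{(0)} = 1`); in particular it is a permutation representation of
`S_n`, namely the linearization of the S_n-set `TIdx n`.  The isomorphism is required to
be S_n-equivariant. -/
theorem chow_one_of_moduli_is_permutation_rep (n : ℕ) (hn : 4 ≤ n) :
    ∃ e : KeelMod n ≃ₗ[ℚ] (TIdx n →₀ ℚ),
      ∀ (σ : Equiv.Perm (Fin n)) (x : BIdx n →₀ ℚ),
        e ((keelSub n).mkQ (keelRelabel n σ x)) =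
          Finsupp.mapDomain (permTIdx n σ) (e ((keelSub n).mkQ x)) := by
  classical
  have hker : keelSub n ≤ LinearMap.ker (KeelAux.phiMap n) := KeelAux.keelSub_le_ker
  have hkeq := KeelAux.ker_eq hn
  have hsurj := KeelAux.phi_surj hn
  have hbij : Function.Bijective ((keelSub n).liftQ (KeelAux.phiMap n) hker) := by
    constructor
    · rw [← LinearMap.ker_eq_bot]
      exact Submodule.ker_liftQ_eq_bot _ _ _ (le_of_eq hkeq.symm)
    · intro y
      obtain ⟨x, hx⟩ := hsurj y
      exact ⟨(keelSub n).mkQ x, by rwa [Submodule.mkQ_apply, Submodule.liftQ_apply]⟩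
  refine ⟨LinearEquiv.ofBijective _ hbij, ?_⟩
  intro σ x
  rw [LinearEquiv.ofBijective_apply, LinearEquiv.ofBijective_apply]
  rw [Submodule.mkQ_apply, Submodule.mkQ_apply, Submodule.liftQ_apply, Submodule.liftQ_apply]
  exact KeelAux.phi_equivariant σ x
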